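/- If there exists an (H, Σ, 3, 1)-difference family and a (K, 3, 1)-difference matrix, then there exists an (H × K, Σ', 3, 1)-difference family, where Σ' = {S × K : S ∈ Σ}. -/

import Mathlib

open scoped Classical

/-- The multiset of differences of a triple (finite subset) of an abelian group. -/
noncomputable def tripleDiffs {G : Type*} [AddCommGroup G] (T : Finset G) : Multiset G :=
  ((T ×ˢ T).filter (fun p => p.1 ≠ p.2)).val.map (fun p => p.1 - p.2)

/-- The multiset of differences of a family of triples. -/
noncomputable def famDiffs {G : Type*} [AddCommGroup G] (F : Finset (Finset G)) : Multiset G :=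
  F.val.bind tripleDiffs

/-- `tripleDiffs` of an embedded copy of `Fin 3`. -/
lemma tripleDiffs_map {G : Type*} [AddCommGroup G] (f : Fin 3 ↪ G) :
    tripleDiffs (Finset.univ.map f)
      = (((Finset.univ ×ˢ Finset.univ : Finset (Fin 3 × Fin 3)).filter
          (fun p => p.1 ≠ p.2)).val).map (fun p => f p.1 - f p.2) := by
  unfold tripleDiffs
  have h1 : (Finset.univ.map f) ×ˢ (Finset.univ.map f)
      = (Finset.univ ×ˢ Finset.univ : Finset (Fin 3 × Fin 3)).map (f.prodMap f) := by
    ext ⟨a, b⟩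
    simp only [Finset.mem_product, Finset.mem_map, Finset.mem_univ, true_and,
      Function.Embedding.prodMap, Function.Embedding.coeFn_mk, Prod.map, Prod.ext_iff,
      Prod.exists]
    constructor
    · rintro ⟨⟨i, hi⟩, ⟨j, hj⟩⟩; exact ⟨i, j, hi, hj⟩
    · rintro ⟨i, j, hi, hj⟩; exact ⟨⟨i, hi⟩, ⟨j, hj⟩⟩
  rw [h1, Finset.filter_map, Finset.map_val, Multiset.map_map]
  refine Multiset.map_congr (congrArg Finset.val ?_) (fun x _ => rfl)
  ext p
  rw [Finset.mem_filter]
  simp [f.injective.ne_iff]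

/-- The `i`-th element of a finset via its `toList`. -/
noncomputable def tv {G : Type*} [AddCommGroup G] (T : Finset G) (i : Fin 3) : G :=
  T.toList.getD i 0

lemma tv_inj {G : Type*} [AddCommGroup G] {T : Finset G} (hT : T.card = 3) :
    Function.Injective (tv T) := by
  have hlen : T.toList.length = 3 := by rw [Finset.length_toList, hT]
  intro i j hij
  have hi : (i : ℕ) < T.toList.length := by rw [hlen]; exact i.isLt
  have hj : (j : ℕ) < T.toList.length := by rw [hlen]; exact j.isLt
  rw [tv, tv, List.getD_eq_getElem _ _ hi, List.getD_eq_getElem _ _ hj] at hij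
  have := (List.nodup_iff_injective_get.mp (Finset.nodup_toList T))
    (a₁ := ⟨i, hi⟩) (a₂ := ⟨j, hj⟩) (by simpa using hij)
  exact Fin.ext (by simpa using congrArg Fin.val this)

lemma tv_map {G : Type*} [AddCommGroup G] {T : Finset G} (hT : T.card = 3) :
    Finset.univ.map ⟨tv T, tv_inj hT⟩ = T := by
  have hlen : T.toList.length = 3 := by rw [Finset.length_toList, hT]
  ext a
  simp only [Finset.mem_map, Finset.mem_univ, true_and, Function.Embedding.coeFn_mk]
  constructor
  · rintro ⟨i, rfl⟩
    have hi : (i : ℕ) < T.toList.length := by rw [hlen]; exact i.isLt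
    rw [tv, List.getD_eq_getElem _ _ hi]
    exact Finset.mem_toList.mp (List.getElem_mem hi)
  · intro ha
    obtain ⟨n, hn, hget⟩ := List.mem_iff_getElem.mp (Finset.mem_toList.mpr ha)
    refine ⟨⟨n, by rwa [hlen] at hn⟩, ?_⟩
    rw [tv, List.getD_eq_getElem _ _ (by simpa using hn)]
    simpa using hget

section Main

variable {H K : Type*} [AddCommGroup H] [Fintype H] [AddCommGroup K] [Fintype K]

/-- The embedding of `Fin 3` giving the lifted triple, when `T.card = 3`. -/
noncomputable def liftEmb (M : Fin 3 → Fin (Fintype.card K) → K) {T : Finset H}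
    (hT : T.card = 3) (k : Fin (Fintype.card K)) : Fin 3 ↪ H × K :=
  ⟨fun i => (tv T i, M i k), fun i j hij => tv_inj hT (congrArg Prod.fst hij)⟩

lemma key_sum (M : Fin 3 → Fin (Fintype.card K) → K)
    (hDM : ∀ i j : Fin 3, i ≠ j → Function.Bijective (fun k => M i k - M j k))
    {T : Finset H} (hT : T.card = 3) :
    (Finset.univ.val.bind (fun k => tripleDiffs (Finset.univ.map (liftEmb M hT k))))
      = (tripleDiffs T).bind (fun d => Finset.univ.val.map (fun κ : K => (d, κ))) := by
  have h1 : ∀ k, tripleDiffs (Finset.univ.map (liftEmb M hT k))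
      = (((Finset.univ ×ˢ Finset.univ : Finset (Fin 3 × Fin 3)).filter
          (fun p => p.1 ≠ p.2)).val).map
          (fun p => (tv T p.1 - tv T p.2, M p.1 k - M p.2 k)) := by
    intro k
    rw [tripleDiffs_map (liftEmb M hT k)]
    refine Multiset.map_congr rfl (fun p _ => ?_)
    rfl
  have h2 : tripleDiffs T
      = (((Finset.univ ×ˢ Finset.univ : Finset (Fin 3 × Fin 3)).filter
          (fun p => p.1 ≠ p.2)).val).map (fun p => tv T p.1 - tv T p.2) := by
    conv_lhs => rw [← tv_map hT]
    rw [tripleDiffs_map]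
    rfl
  simp only [h1]
  rw [Multiset.bind_map_comm, h2, Multiset.bind_map]
  apply Multiset.bind_congr
  intro p hp
  have hpne : p.1 ≠ p.2 := by
    simp only [Finset.mem_val, Finset.mem_filter] at hp
    exact hp.2
  have hbij := hDM p.1 p.2 hpne
  have huniv : (Finset.univ.val.map (fun k => M p.1 k - M p.2 k))
      = (Finset.univ : Finset K).val := by
    have h := Finset.map_univ_equiv (Equiv.ofBijective _ hbij)
    rw [← h, Finset.map_val]
    rfl
  calc Finset.univ.val.map (fun k => (tv T p.1 - tv T p.2, M p.1 k - M p.2 k))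
      = (Finset.univ.val.map (fun k => M p.1 k - M p.2 k)).map
          (fun κ => (tv T p.1 - tv T p.2, κ)) := by rw [Multiset.map_map]; rfl
    _ = _ := by rw [huniv]

end Main

/-- Multiset product bind. -/
lemma mprod_bind {α β γ : Type*} (s : Multiset α) (t : Multiset β) (g : α × β → Multiset γ) :
    (s ×ˢ t).bind g = s.bind (fun a => t.bind (fun b => g (a, b))) := by
  simp [SProd.sprod, Multiset.product, Multiset.bind_assoc, Multiset.bind_map]

/-- If there is an `(H, Σ, 3, 1)`-difference family and a `(K, 3, 1)`-difference matrix,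
then there is an `(H × K, Σ', 3, 1)`-difference family, where `Σ' = {S × K : S ∈ Σ}`. -/
theorem stmt_7 {H K : Type*} [AddCommGroup H] [Fintype H] [AddCommGroup K] [Fintype K]
    (Sp : Finset (AddSubgroup H))
    (htriv : ∀ S ∈ Sp, ∀ S' ∈ Sp, S ≠ S' → S ⊓ S' = ⊥)
    (F : Finset (Finset H)) (hF3 : ∀ T ∈ F, T.card = 3)
    (hDF : famDiffs F = (Finset.univ.filter (fun g : H => ∀ S ∈ Sp, g ∉ S)).val)
    (M : Fin 3 → Fin (Fintype.card K) → K)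
    (hDM : ∀ i j : Fin 3, i ≠ j → Function.Bijective (fun k => M i k - M j k)) :
    ∃ F' : Finset (Finset (H × K)), (∀ T ∈ F', T.card = 3) ∧
      famDiffs F' = (Finset.univ.filter
        (fun g : H × K => ∀ S' ∈ Sp.image (fun S => S.prod (⊤ : AddSubgroup K)), g ∉ S')).val := by
  classical
  set φ : {T // T ∈ F} × Fin (Fintype.card K) → Finset (H × K) :=
    fun p => Finset.univ.map (liftEmb M (hF3 p.1.1 p.1.2) p.2) with hφ
  set F' : Finset (Finset (H × K)) := (F.attach ×ˢ Finset.univ).image φ with hF'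
  -- injectivity of φ
  have hinj : Set.InjOn φ ↑(F.attach ×ˢ (Finset.univ : Finset (Fin (Fintype.card K)))) := by
    rintro ⟨⟨T, hT⟩, k⟩ - ⟨⟨T', hT'⟩, k'⟩ - heq
    simp only [hφ] at heq
    have hTT : T = T' := by
      have h1 : ∀ (U : Finset H) (hU : U ∈ F) (kk : Fin (Fintype.card K)),
          Finset.image Prod.fst (Finset.univ.map (liftEmb M (hF3 U hU) kk)) = U := by
        intro U hU kk
        rw [Finset.map_eq_image, Finset.image_image]
        have h2 : (Prod.fst ∘ ⇑(liftEmb M (hF3 U hU) kk)) = tv U := rfl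
        rw [h2]
        calc Finset.image (tv U) Finset.univ
            = Finset.univ.map ⟨tv U, tv_inj (hF3 U hU)⟩ := (Finset.map_eq_image ⟨tv U, tv_inj (hF3 U hU)⟩ Finset.univ).symm
          _ = U := tv_map (hF3 U hU)
      rw [← h1 T hT k, ← h1 T' hT' k', heq]
    subst hTT
    have hM : ∀ i : Fin 3, M i k = M i k' := by
      intro i
      have hmem : ((tv T i, M i k) : H × K) ∈ Finset.univ.map (liftEmb M (hF3 T hT') k') := by
        rw [← heq]
        exact Finset.mem_map_of_mem _ (Finset.mem_univ i)
      obtain ⟨j, -, hj⟩ := Finset.mem_map.mp hmem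
      have hj' : (tv T j, M j k') = (tv T i, M i k) := hj
      have : j = i := tv_inj (hF3 T hT') (congrArg Prod.fst hj')
      subst this
      exact (congrArg Prod.snd hj').symm
    have hkk : k = k' := by
      have h01 := hDM 0 1 (by decide)
      apply h01.injective
      show M 0 k - M 1 k = M 0 k' - M 1 k'
      rw [hM 0, hM 1]
    simp [hkk]
  refine ⟨F', ?_, ?_⟩
  · intro T' hT'
    obtain ⟨p, -, rfl⟩ := Finset.mem_image.mp hT'
    simp [hφ]
  · -- the difference multiset
    have hval : F'.val = (F.attach ×ˢ Finset.univ).val.map φ := by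
      rw [hF', Finset.image_val, Multiset.dedup_eq_self.mpr]
      exact Multiset.Nodup.map_on (fun x hx y hy h => hinj hx hy h)
        (F.attach ×ˢ Finset.univ).nodup
    have step1 : famDiffs F'
        = F.attach.val.bind (fun t => Finset.univ.val.bind (fun k => tripleDiffs (φ (t, k)))) := by
      rw [famDiffs, hval, Multiset.bind_map, Finset.product_val, mprod_bind]
    have step2 : famDiffs F'
        = F.val.bind (fun T => (tripleDiffs T).bind
            (fun d => Finset.univ.val.map (fun κ : K => (d, κ)))) := by
      rw [step1]
      have : F.val = F.attach.val.map Subtype.val := by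
        rw [Finset.attach_val, Multiset.attach_map_val]
      rw [this, Multiset.bind_map]
      apply Multiset.bind_congr
      intro t _
      exact key_sum M hDM (hF3 t.1 t.2)
    rw [step2, ← Multiset.bind_assoc]
    rw [show F.val.bind tripleDiffs = famDiffs F from rfl, hDF]
    -- now identify the right-hand side
    have hfilter : (Finset.univ.filter
        (fun g : H × K => ∀ S' ∈ Sp.image (fun S => S.prod (⊤ : AddSubgroup K)), g ∉ S'))
        = (Finset.univ.filter (fun g : H => ∀ S ∈ Sp, g ∉ S)) ×ˢ (Finset.univ : Finset K) := by
      ext ⟨h, κ⟩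
      simp [AddSubgroup.mem_prod]
    rw [hfilter, Finset.product_val]
    simp [SProd.sprod, Multiset.product]
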